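/- Fix h ≥ 0 and let m_h(n) denote the number of Motzkin paths of length n with height at most h. Then in the formal power series ring ℚ[[z]]: (∑_{n≥0} m_h(n)·z^n) · D_{h+1}(z) = D_h(z), where the polynomials D_h, D_{h+1} are regarded as power series. -/

import Mathlib

open Finset
open scoped Classical

/-- A step: `+1`, `-1` or `0`. -/
abbrev Step : Type := ({1, -1, 0} : Finset ℤ)

/-- Partial sum of the first `k` steps. -/
def psum {n : ℕ} (w : Fin n → Step) (k : ℕ) : ℤ :=
  ∑ i : Fin n, if (i : ℕ) < k then (w i : ℤ) else 0

/-- `w` is a Motzkin path: all partial sums are nonnegative and the total sum is `0`. -/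
def IsMotzkin {n : ℕ} (w : Fin n → Step) : Prop :=
  (∀ k ∈ Finset.range (n + 1), 0 ≤ psum w k) ∧ psum w n = 0

/-- The height of a path: the maximum of its partial sums (`0` for the empty path). -/
def height {n : ℕ} (w : Fin n → Step) : ℤ :=
  (Finset.range (n + 1)).sup' (Finset.nonempty_range_iff.mpr (Nat.succ_ne_zero n)) (psum w)

/-- `w` has a horizontal step at level `j`: some step is `0` and the partial sum up to
and including that step equals `j`. -/
def HasHorizAt {n : ℕ} (w : Fin n → Step) (j : ℤ) : Prop :=
  ∃ i : Fin n, (w i : ℤ) = 0 ∧ psum w ((i : ℕ) + 1) = j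

open Polynomial in
/-- `D 0 = 1`, `D 1 = 1 - z`, `D n = (1-z) D (n-1) - z^2 D (n-2)`. -/
noncomputable def D : ℕ → Polynomial ℚ
  | 0 => 1
  | 1 => 1 - X
  | (n + 2) => (1 - X) * D (n + 1) - X ^ 2 * D n

/-- `m h n` is the number of Motzkin paths of length `n` with height at most `h`. -/
noncomputable def m (h n : ℕ) : ℕ :=
  (Finset.univ.filter fun w : Fin n → Step => IsMotzkin w ∧ height w ≤ (h : ℤ)).card

lemma psum_zero {n : ℕ} (w : Fin n → Step) : psum w 0 = 0 := by simp [psum]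

lemma psum_succ {n : ℕ} (w : Fin (n+1) → Step) (k : ℕ) :
    psum w (k+1) = (w 0 : ℤ) + psum (fun i => w i.succ) k := by
  unfold psum
  rw [Fin.sum_univ_succ]
  simp [Nat.succ_lt_succ_iff]

lemma sum_step (f : ℤ → ℕ) : ∑ s : Step, f (s:ℤ) = f 1 + f (-1) + f 0 := by
  rw [Finset.univ_eq_attach, Finset.sum_attach _ f]
  show ∑ x ∈ ({1,-1,0} : Finset ℤ), f x = _
  rw [show ({1,-1,0} : Finset ℤ) = insert 1 (insert (-1) {0}) from rfl,
    Finset.sum_insert (by decide), Finset.sum_insert (by decide), Finset.sum_singleton]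
  omega

def cnt (h : ℕ) : ℕ → ℤ → ℕ
  | 0, a => if a = 0 then 1 else 0
  | n+1, a => if 0 ≤ a ∧ a ≤ (h:ℤ) then cnt h n (a+1) + cnt h n (a-1) + cnt h n a else 0

def Ok (h : ℕ) {n : ℕ} (a : ℤ) (w : Fin n → Step) : Prop :=
  (∀ k ≤ n, 0 ≤ a + psum w k ∧ a + psum w k ≤ (h:ℤ)) ∧ a + psum w n = 0

lemma Ok_zero (h : ℕ) (a : ℤ) (w : Fin 0 → Step) : Ok h a w ↔ a = 0 := by
  unfold Ok
  simp only [psum_zero, add_zero]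
  constructor
  · exact fun H => H.2
  · rintro rfl
    refine ⟨fun k _ => ⟨le_refl 0, by positivity⟩, rfl⟩

lemma Ok_succ (h : ℕ) {n : ℕ} (a : ℤ) (w : Fin (n+1) → Step) :
    Ok h a w ↔ (0 ≤ a ∧ a ≤ (h:ℤ)) ∧ Ok h (a + (w 0 : ℤ)) (fun i => w i.succ) := by
  unfold Ok
  constructor
  · intro H
    have h0 := H.1 0 (by omega)
    rw [psum_zero, add_zero] at h0
    refine ⟨h0, fun k hk => ?_, ?_⟩
    · have := H.1 (k+1) (by omega)
      rwa [psum_succ, ← add_assoc] at this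
    · have := H.2
      rwa [psum_succ, ← add_assoc] at this
  · intro H
    refine ⟨fun k hk => ?_, ?_⟩
    · cases k with
      | zero => rw [psum_zero, add_zero]; exact H.1
      | succ k => rw [psum_succ, ← add_assoc]; exact H.2.1 k (by omega)
    · rw [psum_succ, ← add_assoc]; exact H.2.2

lemma card_ok (h : ℕ) : ∀ (n : ℕ) (a : ℤ),
    Fintype.card {w : Fin n → Step // Ok h a w} = cnt h n a := by
  intro n
  induction n with
  | zero =>
    intro a
    rcases eq_or_ne a 0 with rfl | ha
    · have : ∀ w : Fin 0 → Step, Ok h 0 w := fun w => (Ok_zero h 0 w).mpr rfl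
      rw [Fintype.card_congr (Equiv.subtypeUnivEquiv this)]
      simp [cnt]
    · have : IsEmpty {w : Fin 0 → Step // Ok h a w} :=
        ⟨fun w => ha ((Ok_zero h a w.1).mp w.2)⟩
      simp [cnt, ha, Fintype.card_eq_zero]
  | succ n ih =>
    intro a
    by_cases hg : 0 ≤ a ∧ a ≤ (h:ℤ)
    · have key : ∀ (s : Step) (v : Fin n → Step),
          Ok h a (Fin.cons s v) ↔ Ok h (a + (s:ℤ)) v := by
        intro s v
        rw [Ok_succ]
        simp [Fin.cons_zero, Fin.cons_succ, hg]
      have e1 : {w : Fin (n+1) → Step // Ok h a w}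
          ≃ {p : Step × (Fin n → Step) // Ok h (a + (p.1:ℤ)) p.2} :=
        ((Fin.consEquiv (fun _ : Fin (n+1) => Step)).subtypeEquiv (fun p => by
          rw [show (Fin.consEquiv (fun _ : Fin (n+1) => Step)) p = Fin.cons p.1 p.2 from rfl,
            key p.1 p.2])).symm
      have e2 : {p : Step × (Fin n → Step) // Ok h (a + (p.1:ℤ)) p.2}
          ≃ Σ s : Step, {v : Fin n → Step // Ok h (a + (s:ℤ)) v} :=
        Equiv.subtypeProdEquivSigmaSubtype (fun (s : Step) (v : Fin n → Step) => Ok h (a + (s:ℤ)) v)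
      rw [Fintype.card_congr (e1.trans e2), Fintype.card_sigma]
      have : ∀ s : Step, Fintype.card {v : Fin n → Step // Ok h (a + (s:ℤ)) v}
          = cnt h n (a + (s:ℤ)) := fun s => ih _
      rw [Finset.sum_congr rfl (fun s _ => this s), sum_step (fun x => cnt h n (a + x))]
      rw [show a + -1 = a - 1 from by ring, add_zero,
        show cnt h (n+1) a = cnt h n (a+1) + cnt h n (a-1) + cnt h n a from by simp [cnt, hg]]
    · have : IsEmpty {w : Fin (n+1) → Step // Ok h a w} :=
        ⟨fun w => hg ((Ok_succ h a w.1).mp w.2).1⟩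
      simp [cnt, hg, Fintype.card_eq_zero]

lemma motz_iff (h : ℕ) {n : ℕ} (w : Fin n → Step) :
    (IsMotzkin w ∧ height w ≤ (h:ℤ)) ↔ Ok h 0 w := by
  unfold IsMotzkin height Ok
  constructor
  · rintro ⟨⟨h1, h2⟩, h3⟩
    refine ⟨fun k hk => ⟨by simpa using h1 k (Finset.mem_range.mpr (by omega)), ?_⟩,
      by simpa using h2⟩
    have := Finset.le_sup' (psum w) (Finset.mem_range.mpr (show k < n+1 by omega))
    simpa using le_trans this h3
  · rintro ⟨h1, h2⟩
    refine ⟨⟨fun k hk => by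
      simpa using (h1 k (Nat.lt_succ_iff.mp (Finset.mem_range.mp hk))).1,
      by simpa using h2⟩, Finset.sup'_le _ _ (fun k hk => by
      simpa using (h1 k (Nat.lt_succ_iff.mp (Finset.mem_range.mp hk))).2)⟩

lemma m_eq (h n : ℕ) : m h n = cnt h n 0 := by
  rw [m, ← Fintype.card_subtype]
  rw [Fintype.card_congr (Equiv.subtypeEquivRight (fun w => motz_iff h w))]
  exact card_ok h n 0

lemma Dcoe (j : ℕ) : ((D (j+2) : Polynomial ℚ) : PowerSeries ℚ)
    = (1 - PowerSeries.X) * (D (j+1) : PowerSeries ℚ) - PowerSeries.X^2 * (D j : PowerSeries ℚ) := by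
  rw [show D (j+2) = (1 - Polynomial.X) * D (j+1) - Polynomial.X^2 * D j from rfl]
  simp [Polynomial.coe_sub, Polynomial.coe_mul, Polynomial.coe_one, Polynomial.coe_X,
    Polynomial.coe_pow]

lemma Dcoe0 : ((D 0 : Polynomial ℚ) : PowerSeries ℚ) = 1 := by
  rw [show D 0 = 1 from rfl, Polynomial.coe_one]

lemma Dcoe1 : ((D 1 : Polynomial ℚ) : PowerSeries ℚ) = 1 - PowerSeries.X := by
  rw [show D 1 = 1 - Polynomial.X from rfl]
  simp [Polynomial.coe_sub, Polynomial.coe_one, Polynomial.coe_X]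

noncomputable def FF (h : ℕ) (a : ℤ) : PowerSeries ℚ := PowerSeries.mk fun n => (cnt h n a : ℚ)

noncomputable def gg (h : ℕ) (a : ℤ) : PowerSeries ℚ :=
  if 0 ≤ a ∧ a ≤ (h:ℤ) then PowerSeries.X ^ a.toNat * (D (h - a.toNat) : PowerSeries ℚ) else 0

lemma FF_out (h : ℕ) (a : ℤ) (ha : ¬(0 ≤ a ∧ a ≤ (h:ℤ))) : FF h a = 0 := by
  ext n
  cases n with
  | zero =>
    have : a ≠ 0 := by rintro rfl; exact ha ⟨le_refl 0, by positivity⟩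
    simp [FF, cnt, this]
  | succ n => simp [FF, cnt, ha]

lemma gg_out (h : ℕ) (a : ℤ) (ha : ¬(0 ≤ a ∧ a ≤ (h:ℤ))) : gg h a = 0 := if_neg ha

lemma FF_rec (h : ℕ) (a : ℤ) (ha : 0 ≤ a ∧ a ≤ (h:ℤ)) :
    FF h a = (if a = 0 then 1 else 0)
      + PowerSeries.X * (FF h (a+1) + FF h (a-1) + FF h a) := by
  ext n
  cases n with
  | zero => by_cases h0 : a = 0 <;> simp [FF, cnt, h0]
  | succ n => by_cases h0 : a = 0 <;> simp [FF, cnt, h0, ha, PowerSeries.coeff_succ_X_mul]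

lemma gg_rec (h : ℕ) (a : ℤ) (ha : 0 ≤ a ∧ a ≤ (h:ℤ)) :
    gg h a = (if a = 0 then 1 else 0) * (D (h+1) : PowerSeries ℚ)
      + PowerSeries.X * (gg h (a+1) + gg h (a-1) + gg h a) := by
  obtain ⟨b, rfl⟩ := Int.eq_ofNat_of_zero_le ha.1
  have hb : b ≤ h := by exact_mod_cast ha.2
  rcases Nat.eq_zero_or_pos b with rfl | hbpos
  · -- a = 0
    have g0 : gg h 0 = (D h : PowerSeries ℚ) := by
      simp [gg, Nat.cast_nonneg]
    have gm : gg h (-1) = 0 := gg_out h (-1) (by omega)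
    rcases Nat.eq_zero_or_pos h with rfl | hh
    · have g1 : gg 0 ((0:ℕ) + 1) = 0 := gg_out 0 1 (by omega)
      push_cast at g1 ⊢
      rw [g0, g1, gm, Dcoe0, Dcoe1]
      simp
    · obtain ⟨k, rfl⟩ : ∃ k, h = k + 1 := ⟨h - 1, by omega⟩
      have g1 : gg (k+1) ((0:ℕ) + 1) = PowerSeries.X * (D k : PowerSeries ℚ) := by
        rw [gg, if_pos (by constructor <;> omega)]
        norm_num
      push_cast at g1 ⊢
      rw [g0, g1, gm, show k+1+1 = k+2 from by omega, Dcoe k]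
      simp
      ring
  · obtain ⟨i, rfl⟩ : ∃ i, b = i + 1 := ⟨b - 1, by omega⟩
    have hne : ((i:ℤ) + 1) ≠ 0 := by omega
    have gb : gg h ((i:ℕ)+1 : ℕ) = PowerSeries.X ^ (i+1) * (D (h - (i+1)) : PowerSeries ℚ) := by
      rw [gg, if_pos (by constructor <;> [omega; exact_mod_cast ha.2])]
      norm_num
    have gdown : gg h (((i:ℕ)+1 : ℕ) - 1) = PowerSeries.X ^ i * (D (h - i) : PowerSeries ℚ) := by
      rw [gg, if_pos (by push_cast; constructor <;> omega)]
      norm_num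
    rcases eq_or_lt_of_le hb with he | hlt
    · -- i+1 = h
      subst he
      have gup : gg (i+1) (((i:ℕ)+1 : ℕ) + 1) = 0 := gg_out _ _ (by push_cast; omega)
      push_cast at gb gdown gup ⊢
      rw [gb, gdown, gup, if_neg hne]
      simp only [Nat.add_sub_cancel, Nat.sub_self]
      rw [show (i+1) - i = 1 from by omega] at *
      rw [Dcoe0, Dcoe1]
      ring
    · obtain ⟨j, rfl⟩ : ∃ j, h = (i+1) + 1 + j := ⟨h - i - 2, by omega⟩
      have gup : gg ((i+1)+1+j) (((i:ℕ)+1 : ℕ) + 1) =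
          PowerSeries.X ^ (i+2) * (D j : PowerSeries ℚ) := by
        rw [gg, if_pos (by push_cast; constructor <;> omega)]
        rw [show (((i:ℕ)+1:ℕ) + 1 : ℤ).toNat = i + 2 from by omega,
          show (i+1)+1+j - (i+2) = j from by omega]
      push_cast at gb gdown gup ⊢
      rw [gb, gdown, gup, if_neg hne,
        show i+1+1+j - (i+1) = j+1 from by omega,
        show i+1+1+j - i = j+2 from by omega, Dcoe j]
      ring

lemma Erec (h : ℕ) (a : ℤ) (ha : 0 ≤ a ∧ a ≤ (h:ℤ)) :
    FF h a * (D (h+1) : PowerSeries ℚ) - gg h a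
      = PowerSeries.X * ((FF h (a+1) * (D (h+1) : PowerSeries ℚ) - gg h (a+1))
        + (FF h (a-1) * (D (h+1) : PowerSeries ℚ) - gg h (a-1))
        + (FF h a * (D (h+1) : PowerSeries ℚ) - gg h a)) := by
  conv_lhs => rw [FF_rec h a ha, gg_rec h a ha]
  ring

lemma EE (h : ℕ) : ∀ (n : ℕ) (a : ℤ), 0 ≤ a → a ≤ (h:ℤ) →
    PowerSeries.coeff n (FF h a * (D (h+1) : PowerSeries ℚ) - gg h a) = 0 := by
  have term : ∀ (n : ℕ) (a : ℤ), ¬(0 ≤ a ∧ a ≤ (h:ℤ)) →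
      PowerSeries.coeff n (FF h a * (D (h+1) : PowerSeries ℚ) - gg h a) = 0 := by
    intro n a ha
    rw [FF_out h a ha, gg_out h a ha]
    simp
  intro n
  induction n with
  | zero =>
    intro a h0 h1
    rw [Erec h a ⟨h0, h1⟩]
    exact PowerSeries.coeff_zero_X_mul _
  | succ n ih =>
    intro a h0 h1
    rw [Erec h a ⟨h0, h1⟩]
    rw [PowerSeries.coeff_succ_X_mul, map_add, map_add]
    have t1 : PowerSeries.coeff n (FF h (a+1) * (D (h+1) : PowerSeries ℚ) - gg h (a+1)) = 0 := by
      by_cases hc : a + 1 ≤ (h:ℤ)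
      · exact ih (a+1) (by omega) hc
      · exact term n (a+1) (by omega)
    have t2 : PowerSeries.coeff n (FF h (a-1) * (D (h+1) : PowerSeries ℚ) - gg h (a-1)) = 0 := by
      by_cases hc : 0 ≤ a - 1
      · exact ih (a-1) hc (by omega)
      · exact term n (a-1) (by omega)
    rw [t1, t2, ih a h0 h1]
    ring

lemma final (h : ℕ) : FF h 0 * (D (h+1) : PowerSeries ℚ) = (D h : PowerSeries ℚ) := by
  have : FF h 0 * (D (h+1) : PowerSeries ℚ) - gg h 0 = 0 := by
    ext n
    simpa using EE h n 0 (le_refl 0) (by positivity)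
  have g0 : gg h 0 = (D h : PowerSeries ℚ) := by simp [gg, Nat.cast_nonneg]
  rw [g0] at this
  linear_combination this

/-- The generating function of Motzkin paths of height at most `h` equals `D h / D (h+1)`. -/
theorem motzkin_height_le_genfun (h : ℕ) :
    (PowerSeries.mk fun n => (m h n : ℚ)) * (D (h + 1) : PowerSeries ℚ)
      = (D h : PowerSeries ℚ) := by
  have e : (PowerSeries.mk fun n => (m h n : ℚ)) = FF h 0 := by
    unfold FF
    ext n
    simp [PowerSeries.coeff_mk, m_eq]
  rw [e]
  exact final h
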